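/- Let c_λ = Γ(λ+1)/(Γ(1/2)Γ(λ+1/2)). Then for every real s, lim_{λ→∞} (c_λ/√(2λ)) · (1 − s²/(2λ))^{λ−1/2} · 𝟙_{[−√(2λ),√(2λ)]}(s) = e^{−s²/2}/√(2π). -/

import Mathlib

open Filter Real

lemma wendel_lower {x : ℝ} (hx : 0 < x) :
    Real.sqrt x * Real.Gamma (x + 1 / 2) ≤ Real.Gamma (x + 1) := by
  have h := Real.Gamma_mul_add_mul_le_rpow_Gamma_mul_rpow_Gamma (s := x) (t := x + 1)
    (a := 1 / 2) (b := 1 / 2) hx (by linarith) (by norm_num) (by norm_num) (by norm_num)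
  have harg : (1 / 2 : ℝ) * x + 1 / 2 * (x + 1) = x + 1 / 2 := by ring
  rw [harg] at h
  have hG : Real.Gamma (x + 1) = x * Real.Gamma x := Real.Gamma_add_one hx.ne'
  have hGx : 0 < Real.Gamma x := Real.Gamma_pos_of_pos hx
  have hG1 : 0 < Real.Gamma (x + 1) := Real.Gamma_pos_of_pos (by linarith)
  -- Γ x ^ (1/2) * Γ (x+1) ^ (1/2) = Γ(x+1) / √x
  have key : Real.Gamma x ^ (1 / 2 : ℝ) * Real.Gamma (x + 1) ^ (1 / 2 : ℝ)
      = Real.Gamma (x + 1) / Real.sqrt x := by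
    have h1 : Real.Gamma x * Real.Gamma (x + 1) = Real.Gamma (x + 1) ^ 2 / x := by
      rw [hG]; field_simp
    rw [← Real.mul_rpow hGx.le hG1.le, h1, Real.div_rpow (by positivity) hx.le]
    simp only [← Real.sqrt_eq_rpow]
    rw [Real.sqrt_sq hG1.le]
  rw [key] at h
  rw [mul_comm, ← le_div_iff₀ (Real.sqrt_pos.mpr hx)]
  exact h

lemma wendel_upper {x : ℝ} (hx : 0 < x) :
    Real.Gamma (x + 1) ≤ Real.sqrt (x + 1 / 2) * Real.Gamma (x + 1 / 2) := by
  have h := Real.Gamma_mul_add_mul_le_rpow_Gamma_mul_rpow_Gamma (s := x + 1 / 2)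
    (t := x + 3 / 2) (a := 1 / 2) (b := 1 / 2) (by linarith) (by linarith)
    (by norm_num) (by norm_num) (by norm_num)
  have harg : (1 / 2 : ℝ) * (x + 1 / 2) + 1 / 2 * (x + 3 / 2) = x + 1 := by ring
  rw [harg] at h
  have hG : Real.Gamma (x + 3 / 2) = (x + 1 / 2) * Real.Gamma (x + 1 / 2) := by
    have : x + 3 / 2 = (x + 1 / 2) + 1 := by ring
    rw [this, Real.Gamma_add_one (by positivity)]
  have hGx : 0 < Real.Gamma (x + 1 / 2) := Real.Gamma_pos_of_pos (by linarith)
  rw [hG] at h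
  have key : Real.Gamma (x + 1 / 2) ^ (1 / 2 : ℝ)
      * ((x + 1 / 2) * Real.Gamma (x + 1 / 2)) ^ (1 / 2 : ℝ)
      = Real.sqrt (x + 1 / 2) * Real.Gamma (x + 1 / 2) := by
    rw [Real.mul_rpow (by positivity) hGx.le, Real.sqrt_eq_rpow]
    rw [show Real.Gamma (x + 1/2) ^ (1/2:ℝ) * ((x + 1/2) ^ (1/2:ℝ)
        * Real.Gamma (x + 1/2) ^ (1/2:ℝ))
      = (x + 1/2) ^ (1/2:ℝ) * (Real.Gamma (x + 1/2) ^ (1/2:ℝ)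
        * Real.Gamma (x + 1/2) ^ (1/2:ℝ)) by ring]
    rw [← Real.rpow_add hGx]
    norm_num
  rw [key] at h
  exact h

lemma gamma_ratio_tendsto :
    Tendsto (fun l : ℝ => Real.Gamma (l + 1) / (Real.Gamma (l + 1 / 2) * Real.sqrt l))
      atTop (nhds 1) := by
  have hub : Tendsto (fun l : ℝ => Real.sqrt ((l + 1 / 2) / l)) atTop (nhds 1) := by
    have h : Tendsto (fun l : ℝ => (l + 1 / 2) / l) atTop (nhds 1) := by
      have : (fun l : ℝ => (l + 1 / 2) / l) =ᶠ[atTop] fun l => 1 + (1 / 2) / l := by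
        filter_upwards [eventually_gt_atTop (0 : ℝ)] with l hl
        field_simp
      rw [tendsto_congr' this]
      simpa using ((tendsto_const_nhds (α := ℝ)).add
        (tendsto_const_nhds.div_atTop (tendsto_id)))
    simpa [Function.comp_def] using (Real.continuous_sqrt.continuousAt.tendsto.comp h)
  apply tendsto_of_tendsto_of_tendsto_of_le_of_le' tendsto_const_nhds hub
  · filter_upwards [eventually_gt_atTop (0 : ℝ)] with l hl
    have h := wendel_lower hl
    have hGx : 0 < Real.Gamma (l + 1 / 2) := Real.Gamma_pos_of_pos (by linarith)
    rw [one_le_div (by positivity)]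
    calc Real.Gamma (l + 1 / 2) * Real.sqrt l = Real.sqrt l * Real.Gamma (l + 1 / 2) := by ring
    _ ≤ Real.Gamma (l + 1) := h
  · filter_upwards [eventually_gt_atTop (0 : ℝ)] with l hl
    have h := wendel_upper hl
    have hGx : 0 < Real.Gamma (l + 1 / 2) := Real.Gamma_pos_of_pos (by linarith)
    rw [div_le_iff₀ (by positivity)]
    have hrw : Real.sqrt ((l + 1 / 2) / l) * (Real.Gamma (l + 1 / 2) * Real.sqrt l)
        = Real.sqrt (l + 1 / 2) * Real.Gamma (l + 1 / 2) := by
      rw [Real.sqrt_div (by linarith) l]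
      have hsl : Real.sqrt l ≠ 0 := (Real.sqrt_pos.mpr hl).ne'
      field_simp
    rw [hrw]
    exact h

theorem stmt_8 (s : ℝ) :
    Tendsto
      (fun l : ℝ =>
        (Real.Gamma (l + 1) / (Real.Gamma (1 / 2) * Real.Gamma (l + 1 / 2))) /
            Real.sqrt (2 * l) *
          (1 - s ^ 2 / (2 * l)) ^ (l - 1 / 2) *
          Set.indicator (Set.Icc (-Real.sqrt (2 * l)) (Real.sqrt (2 * l)))
            (fun _ => (1 : ℝ)) s)
      atTop (nhds (Real.exp (-s ^ 2 / 2) / Real.sqrt (2 * π))) := by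
  have hBbase : Tendsto (fun l : ℝ => 1 - s ^ 2 / (2 * l)) atTop (nhds 1) := by
    have h2l : Tendsto (fun l : ℝ => 2 * l) atTop atTop :=
      (tendsto_id (α := ℝ)).const_mul_atTop two_pos
    simpa using (tendsto_const_nhds (x := (1:ℝ))).sub
      ((tendsto_const_nhds (x := s ^ 2)).div_atTop h2l)
  have hC : Tendsto (fun l : ℝ => ((1 - s ^ 2 / (2 * l)) ^ ((1:ℝ)/2))⁻¹) atTop (nhds 1) := by
    have := (hBbase.rpow_const (p := (1:ℝ)/2) (Or.inl one_ne_zero)).inv₀ (by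
      rw [Real.one_rpow]; exact one_ne_zero)
    simpa using this
  have hB : Tendsto (fun l : ℝ => (1 + (-(s ^ 2 / 2)) / l) ^ l) atTop
      (nhds (Real.exp (-(s ^ 2 / 2)))) := tendsto_one_add_div_rpow_exp _
  have hG : Tendsto (fun l : ℝ =>
      Real.Gamma (l + 1) / (Real.Gamma (l + 1 / 2) * Real.sqrt l) *
        (1 + (-(s ^ 2 / 2)) / l) ^ l *
        ((1 - s ^ 2 / (2 * l)) ^ ((1:ℝ)/2))⁻¹ / Real.sqrt (2 * π)) atTop
      (nhds (1 * Real.exp (-(s ^ 2 / 2)) * 1 / Real.sqrt (2 * π))) :=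
    ((gamma_ratio_tendsto.mul hB).mul hC).div_const _
  rw [show (1:ℝ) * Real.exp (-(s ^ 2 / 2)) * 1 = Real.exp (-s ^ 2 / 2) by
    rw [neg_div]; ring] at hG
  apply hG.congr'
  filter_upwards [eventually_gt_atTop (max 1 (s ^ 2))] with l hl
  have hl1 : (1:ℝ) < l := lt_of_le_of_lt (le_max_left _ _) hl
  have hls : s ^ 2 < l := lt_of_le_of_lt (le_max_right _ _) hl
  have hl0 : (0:ℝ) < l := by linarith
  have hb : 0 < 1 - s ^ 2 / (2 * l) := by
    rw [sub_pos, div_lt_one (by linarith)]; linarith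
  have hind : Set.indicator (Set.Icc (-Real.sqrt (2 * l)) (Real.sqrt (2 * l)))
      (fun _ => (1 : ℝ)) s = 1 := by
    apply Set.indicator_of_mem
    have habs : |s| ≤ Real.sqrt (2 * l) := by
      rw [← Real.sqrt_sq_eq_abs]
      exact Real.sqrt_le_sqrt (by linarith)
    exact abs_le.mp habs
  have hbase : 1 - s ^ 2 / (2 * l) = 1 + (-(s ^ 2 / 2)) / l := by
    field_simp
    ring
  have hpow : (1 - s ^ 2 / (2 * l)) ^ (l - 1 / 2)
      = (1 + (-(s ^ 2 / 2)) / l) ^ l * ((1 - s ^ 2 / (2 * l)) ^ ((1:ℝ)/2))⁻¹ := by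
    rw [Real.rpow_sub hb, ← hbase, div_eq_mul_inv]
  have hsqrt2l : Real.sqrt (2 * l) = Real.sqrt 2 * Real.sqrt l :=
    Real.sqrt_mul (by norm_num) l
  have hsqrt2pi : Real.sqrt (2 * π) = Real.sqrt 2 * Real.sqrt π :=
    Real.sqrt_mul (by norm_num) π
  have hGhalf : Real.Gamma (1 / 2 : ℝ) = Real.sqrt π := Real.Gamma_one_half_eq
  have hGl : (0:ℝ) < Real.Gamma (l + 1 / 2) := Real.Gamma_pos_of_pos (by linarith)
  have hsl : Real.sqrt l ≠ 0 := (Real.sqrt_pos.mpr hl0).ne'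
  have hs2 : Real.sqrt 2 ≠ 0 := by positivity
  have hspi : Real.sqrt π ≠ 0 := by positivity
  rw [hind, hpow, hsqrt2l, hsqrt2pi, hGhalf, mul_one]
  field_simp
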